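/- Let Q be a finite quiver without oriented cycles. Then the cone C_Q = Σ_{α ∈ Q_1} ℕ·(e_{t(α)} - e_{s(α)}) ⊆ ℤ^{Q_0} is saturated: if x ∈ ℤ^{Q_0} and λ·x ∈ C_Q for some positive integer λ, then x ∈ C_Q. -/

import Mathlib

section Aux

variable {V A : Type} [Fintype V] [DecidableEq V] (s t : A → V)

private def gens (s t : A → V) : Set (V → ℤ) :=
  {y : V → ℤ | ∃ a : A, y = Pi.single (t a) 1 - Pi.single (s a) 1}

private def IsClosed' (s t : A → V) (S : Finset V) : Prop := ∀ a : A, s a ∈ S → t a ∈ S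

private def Cond (s t : A → V) (x : V → ℤ) : Prop :=
  (∑ v, x v = 0) ∧ ∀ S : Finset V, IsClosed' s t S → 0 ≤ ∑ v ∈ S, x v

private lemma sum_single (S : Finset V) (i : V) (c : ℤ) :
    ∑ v ∈ S, Pi.single i c v = if i ∈ S then c else 0 := by
  simp [Pi.single_apply, Finset.sum_ite_eq']

private lemma cond_of_mem {x : V → ℤ} (hx : x ∈ AddSubmonoid.closure (gens s t)) :
    Cond s t x := by
  induction hx using AddSubmonoid.closure_induction with
  | mem y hy =>
    obtain ⟨a, rfl⟩ := hy
    constructor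
    · simp [Finset.sum_sub_distrib, sum_single]
    · intro S hS
      simp only [Pi.sub_apply, Finset.sum_sub_distrib, sum_single]
      by_cases h : s a ∈ S
      · simp [h, hS a h]
      · by_cases h2 : t a ∈ S <;> simp [h, h2]
  | zero => constructor <;> simp
  | add a b _ _ ha hb =>
    refine ⟨?_, fun S hS => ?_⟩
    · simp only [Pi.add_apply, Finset.sum_add_distrib, ha.1, hb.1, add_zero]
    · simp only [Pi.add_apply, Finset.sum_add_distrib]
      exact add_nonneg (ha.2 S hS) (hb.2 S hS)

private lemma reach_mem {u w : V}
    (h : Relation.ReflTransGen (fun p q : V => ∃ a : A, s a = p ∧ t a = q) u w) :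
    Pi.single w 1 - Pi.single u 1 ∈ AddSubmonoid.closure (gens s t) := by
  induction h with
  | refl => simp only [sub_self]; exact zero_mem _
  | @tail b c hab step ih =>
    obtain ⟨a, ha1, ha2⟩ := step
    have : (Pi.single c 1 - Pi.single u 1 : V → ℤ) =
        (Pi.single (t a) 1 - Pi.single (s a) 1) + (Pi.single b 1 - Pi.single u 1) := by
      rw [ha1, ha2]; abel
    rw [this]
    exact add_mem (AddSubmonoid.subset_closure ⟨a, rfl⟩) ih

private lemma mem_of_cond : ∀ (n : ℕ) (x : V → ℤ), (∑ v, (x v).toNat) ≤ n → Cond s t x →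
    x ∈ AddSubmonoid.closure (gens s t) := by
  intro n
  induction n with
  | zero =>
    intro x hn hc
    have hx0 : ∀ v, x v ≤ 0 := by
      intro v
      by_contra h
      push_neg at h
      have h1 : 1 ≤ (x v).toNat := by omega
      have h2 : (x v).toNat ≤ ∑ v, (x v).toNat :=
        Finset.single_le_sum (f := fun v => (x v).toNat)
          (fun i _ => Nat.zero_le _) (Finset.mem_univ v)
      omega
    have : ∀ v ∈ Finset.univ, x v = 0 :=
      (Finset.sum_eq_zero_iff_of_nonpos (fun v _ => hx0 v)).mp hc.1
    have hx : x = 0 := funext fun v => this v (Finset.mem_univ v)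
    rw [hx]; exact zero_mem _
  | succ n ih =>
    intro x hn hc
    classical
    by_cases hpos : ∃ w, 0 < x w
    · obtain ⟨w, hw⟩ := hpos
      -- the minimal closed set containing w with sum zero
      set Sstar : Finset V := Finset.univ.filter
        (fun v => ∀ S : Finset V, IsClosed' s t S → (∑ v ∈ S, x v) = 0 → w ∈ S → v ∈ S)
        with hSstar
      have hmem : ∀ v, v ∈ Sstar ↔
          ∀ S : Finset V, IsClosed' s t S → (∑ v ∈ S, x v) = 0 → w ∈ S → v ∈ S := by
        intro v; simp [hSstar]
      have hwS : w ∈ Sstar := (hmem w).mpr (fun S _ _ hwS => hwS)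
      have hclosed : IsClosed' s t Sstar := by
        intro a ha
        rw [hmem] at ha ⊢
        intro S hS hsum hwS
        exact hS a (ha S hS hsum hwS)
      -- sum over Sstar is zero
      have hsum0 : ∑ v ∈ Sstar, x v = 0 := by
        -- Sstar is the inf of the family of qualifying sets
        set Q : Finset V → Prop :=
          fun S => IsClosed' s t S ∧ (∑ v ∈ S, x v) = 0 ∧ w ∈ S with hQ
        have hQinter : ∀ S T, Q S → Q T → Q (S ∩ T) := by
          rintro S T ⟨hS1, hS2, hS3⟩ ⟨hT1, hT2, hT3⟩
          have hU : IsClosed' s t (S ∪ T) := by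
            intro a ha
            rcases Finset.mem_union.mp ha with h | h
            · exact Finset.mem_union_left _ (hS1 a h)
            · exact Finset.mem_union_right _ (hT1 a h)
          have hI : IsClosed' s t (S ∩ T) := by
            intro a ha
            rcases Finset.mem_inter.mp ha with ⟨h1, h2⟩
            exact Finset.mem_inter.mpr ⟨hS1 a h1, hT1 a h2⟩
          have h1 : 0 ≤ ∑ v ∈ S ∪ T, x v := hc.2 _ hU
          have h2 : 0 ≤ ∑ v ∈ S ∩ T, x v := hc.2 _ hI
          have h3 : (∑ v ∈ S ∪ T, x v) + ∑ v ∈ S ∩ T, x v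
              = (∑ v ∈ S, x v) + ∑ v ∈ T, x v := Finset.sum_union_inter
          refine ⟨hI, by omega, Finset.mem_inter.mpr ⟨hS3, hT3⟩⟩
        -- finite intersection over all qualifying sets
        have key : ∀ (𝒮 : Finset (Finset V)), (∀ S ∈ 𝒮, Q S) → Q (𝒮.inf id) := by
          intro 𝒮
          induction 𝒮 using Finset.induction_on with
          | empty =>
            intro _
            refine ⟨fun a _ => by simp [Finset.inf_empty, Finset.top_eq_univ], ?_, ?_⟩
            · simpa [Finset.inf_empty, Finset.top_eq_univ] using hc.1
            · simp [Finset.inf_empty, Finset.top_eq_univ]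
          | @insert S 𝒮' hnotmem ih2 =>
            intro hall
            rw [Finset.inf_insert]
            have := hQinter S (𝒮'.inf id)
              (hall S (Finset.mem_insert_self _ _))
              (ih2 (fun T hT => hall T (Finset.mem_insert_of_mem hT)))
            simpa [Finset.inf_eq_inter, id] using this
        set 𝒮 : Finset (Finset V) := Finset.univ.filter Q with h𝒮
        have hQ𝒮 : Q (𝒮.inf id) := key 𝒮 (fun S hS => (Finset.mem_filter.mp hS).2)
        have hSeq : Sstar = 𝒮.inf id := by
          apply Finset.ext
          intro v
          rw [hmem]
          constructor
          · intro h
            have hall : ∀ S ∈ 𝒮, v ∈ S := by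
              intro S hS
              obtain ⟨h1, h2, h3⟩ := (Finset.mem_filter.mp hS).2
              exact h S h1 h2 h3
            have meminf : ∀ (𝒯 : Finset (Finset V)), (∀ S ∈ 𝒯, v ∈ S) → v ∈ 𝒯.inf id := by
              intro 𝒯
              induction 𝒯 using Finset.induction_on with
              | empty => intro _; simp [Finset.inf_empty, Finset.top_eq_univ]
              | @insert S 𝒯' hnotmem ih2 =>
                intro hall'
                rw [Finset.inf_insert, Finset.inf_eq_inter]
                refine Finset.mem_inter.mpr ⟨hall' S (Finset.mem_insert_self _ _), ?_⟩
                exact ih2 (fun T hT => hall' T (Finset.mem_insert_of_mem hT))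
            exact meminf 𝒮 hall
          · intro hv S hS1 hS2 hS3
            have hSmem : S ∈ 𝒮 := Finset.mem_filter.mpr ⟨Finset.mem_univ _, hS1, hS2, hS3⟩
            have : 𝒮.inf id ≤ S := Finset.inf_le hSmem
            exact this hv
        rw [hSeq]
        exact hQ𝒮.2.1
      -- find u ∈ Sstar with x u < 0 reaching w
      have hu : ∃ u ∈ Sstar, x u < 0 ∧
          Relation.ReflTransGen (fun p q : V => ∃ a : A, s a = p ∧ t a = q) u w := by
        by_contra hcon
        push_neg at hcon
        set R := fun v => Relation.ReflTransGen
          (fun p q : V => ∃ a : A, s a = p ∧ t a = q) v w with hR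
        set D : Finset V := Sstar.filter (fun v => ¬ R v) with hD
        set E : Finset V := Sstar.filter (fun v => R v) with hE
        have hDc : IsClosed' s t D := by
          intro a ha
          obtain ⟨ha1, ha2⟩ := Finset.mem_filter.mp ha
          refine Finset.mem_filter.mpr ⟨hclosed a ha1, ?_⟩
          intro hr
          exact ha2 (Relation.ReflTransGen.head ⟨a, rfl, rfl⟩ hr)
        have hDnn : 0 ≤ ∑ v ∈ D, x v := hc.2 _ hDc
        have hEnn : ∀ v ∈ E, 0 ≤ x v := by
          intro v hv
          obtain ⟨hv1, hv2⟩ := Finset.mem_filter.mp hv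
          by_contra h
          push_neg at h
          exact absurd hv2 (by simpa using hcon v hv1 h)
        have hwE : w ∈ E := Finset.mem_filter.mpr ⟨hwS, Relation.ReflTransGen.refl⟩
        have hElow : x w ≤ ∑ v ∈ E, x v := Finset.single_le_sum hEnn hwE
        have hsplit : (∑ v ∈ E, x v) + ∑ v ∈ D, x v = ∑ v ∈ Sstar, x v := by
          rw [hE, hD]
          exact Finset.sum_filter_add_sum_filter_not _ _ _
        omega
      obtain ⟨u, huS, hux, hreach⟩ := hu
      have hune : u ≠ w := by intro h; rw [h] at hux; omega
      set x' : V → ℤ := x + Pi.single u 1 - Pi.single w 1 with hx'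
      have hx'val : ∀ v, v ≠ u → v ≠ w → x' v = x v := by
        intro v h1 h2
        simp [hx', Pi.single_eq_of_ne h1, Pi.single_eq_of_ne h2]
      have hx'u : x' u = x u + 1 := by
        simp [hx', Pi.single_eq_of_ne hune, Pi.single_eq_same]
      have hx'w : x' w = x w - 1 := by
        simp [hx', Pi.single_eq_of_ne (Ne.symm hune), Pi.single_eq_same]
      -- condition for x'
      have hcond' : Cond s t x' := by
        constructor
        · simp only [hx', Pi.sub_apply, Pi.add_apply, Finset.sum_sub_distrib,
            Finset.sum_add_distrib, sum_single, hc.1]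
          simp
        · intro S hS
          have hbase : 0 ≤ ∑ v ∈ S, x v := hc.2 S hS
          have hsum' : ∑ v ∈ S, x' v = (∑ v ∈ S, x v)
              + (if u ∈ S then 1 else 0) - (if w ∈ S then 1 else 0) := by
            simp only [hx', Pi.sub_apply, Pi.add_apply, Finset.sum_sub_distrib,
              Finset.sum_add_distrib, sum_single]
          rw [hsum']
          by_cases hwmem : w ∈ S
          · by_cases hzero : (∑ v ∈ S, x v) = 0
            · have humem : u ∈ S := (hmem u).mp huS S hS hzero hwmem
              simp [humem, hwmem, hzero]
            · have : 1 ≤ ∑ v ∈ S, x v := by omega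
              split_ifs <;> omega
          · simp only [if_neg hwmem]
            split_ifs <;> omega
      -- the measure decreases
      have hmeas : (∑ v, (x' v).toNat) ≤ n := by
        have e1 : (x' u).toNat = 0 := by rw [hx'u]; omega
        have e2 : (x u).toNat = 0 := by omega
        have e3 : (x' w).toNat + 1 = (x w).toNat := by rw [hx'w]; omega
        have key : ∀ f g : V → ℕ, f u = g u → f w + 1 = g w →
            (∀ v, v ≠ u → v ≠ w → f v = g v) → (∑ v, f v) + 1 = ∑ v, g v := by
          intro f g h1 h2 h3
          have hsub : ∀ z : V → ℕ, ∑ v, z v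
              = z u + (z w + ∑ v ∈ (Finset.univ.erase u).erase w, z v) := by
            intro z
            rw [Finset.add_sum_erase _ _ (Finset.mem_erase.mpr ⟨Ne.symm hune, Finset.mem_univ _⟩),
              Finset.add_sum_erase _ _ (Finset.mem_univ u)]
          rw [hsub f, hsub g, h1]
          have : ∑ v ∈ (Finset.univ.erase u).erase w, f v
              = ∑ v ∈ (Finset.univ.erase u).erase w, g v := by
            apply Finset.sum_congr rfl
            intro v hv
            obtain ⟨hv1, hv2⟩ := Finset.mem_erase.mp hv
            exact h3 v (Finset.mem_erase.mp hv2).1 hv1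
          omega
        have := key (fun v => (x' v).toNat) (fun v => (x v).toNat)
          (by simp [e1, e2]) (by simpa using e3)
          (fun v h1 h2 => by simp [hx'val v h1 h2])
        have h9 : (∑ v, (x' v).toNat) + 1 = ∑ v, (x v).toNat := this
        omega
      have hx'mem := ih x' hmeas hcond'
      have hfinal : x = (Pi.single w 1 - Pi.single u 1) + x' := by
        rw [hx']; abel
      rw [hfinal]
      exact add_mem (reach_mem s t hreach) hx'mem
    · -- no positive entry: x = 0
      push_neg at hpos
      have : ∀ v ∈ Finset.univ, x v = 0 :=
        (Finset.sum_eq_zero_iff_of_nonpos (fun v _ => hpos v)).mp hc.1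
      have hx : x = 0 := funext fun v => this v (Finset.mem_univ v)
      rw [hx]; exact zero_mem _

end Aux

/-- the cone `C_Q` of a finite quiver without oriented cycles is saturated. -/
theorem cone_saturated {V A : Type} [Fintype V] [DecidableEq V] (s t : A → V)
    (hacyc : ∀ v : V, ¬ Relation.TransGen (fun u w : V => ∃ a : A, s a = u ∧ t a = w) v v)
    (x : V → ℤ) (lam : ℕ) (hlam : 0 < lam)
    (hx : lam • x ∈ AddSubmonoid.closure
      {y : V → ℤ | ∃ a : A, y = Pi.single (t a) 1 - Pi.single (s a) 1}) :
    x ∈ AddSubmonoid.closure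
      {y : V → ℤ | ∃ a : A, y = Pi.single (t a) 1 - Pi.single (s a) 1} := by
  have hc : Cond s t (lam • x) := cond_of_mem s t hx
  have hcx : Cond s t x := by
    have hl : (0 : ℤ) < (lam : ℤ) := by exact_mod_cast hlam
    constructor
    · have h1 : ∑ v, (lam • x) v = (lam : ℤ) * ∑ v, x v := by
        rw [Finset.mul_sum]
        apply Finset.sum_congr rfl
        intro v _
        simp [zsmul_eq_mul, mul_comm]
      have h2 := hc.1
      rw [h1] at h2
      rcases mul_eq_zero.mp h2 with h | h
      · omega
      · exact h
    · intro S hS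
      have h1 : ∑ v ∈ S, (lam • x) v = (lam : ℤ) * ∑ v ∈ S, x v := by
        rw [Finset.mul_sum]
        apply Finset.sum_congr rfl
        intro v _
        simp [mul_comm]
      have h2 := hc.2 S hS
      rw [h1] at h2
      exact nonneg_of_mul_nonneg_right h2 hl
  exact mem_of_cond s t (∑ v, (x v).toNat) x le_rfl hcx
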